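/- arXiv:1211.4668 — 2 statements merged into one kernel-verified Lean document; each statement's English description precedes it below -/
import Mathlib

section
/- (Acausal Gronwall inequality) Let η, C, γ, γ' > 0 and let (x_k)_{k≥0} be a bounded nonnegative sequence satisfying x_k ≤ C·2^{-γk} + η·Σ_{l=0}^{k-1} 2^{-γ(k-l)} x_l + η·Σ_{l≥k} 2^{-γ'(l-k)} x_l for all k ≥ 0. If η ≤ (1/4)·min{1 - 2^{-γ}, 1 - 2^{-γ'}, 1 - 2^{ρ-γ}} for some 0 < ρ < γ, then x_k ≤ (4C + sup_l x_l)·2^{-ρk} for all k ≥ 0. -/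
open Real Filter

private lemma geom_aux (s : ℝ) (h0 : 0 ≤ s) (h1 : s < 1) (k : ℕ) :
    ∑ l ∈ Finset.range k, s ^ (k - l) ≤ s / (1 - s) := by
  have h1s : (0:ℝ) < 1 - s := by linarith
  induction k with
  | zero => simp; positivity
  | succ k ih =>
    rw [Finset.sum_range_succ]
    have hc : ∀ l ∈ Finset.range k, s ^ (k + 1 - l) = s * s ^ (k - l) := by
      intro l hl
      rw [Finset.mem_range] at hl
      rw [show k + 1 - l = (k - l) + 1 by omega, pow_succ, mul_comm]
    rw [Finset.sum_congr rfl hc, ← Finset.mul_sum]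
    have hlast : s ^ (k + 1 - k) = s := by rw [show k + 1 - k = 1 by omega, pow_one]
    rw [hlast]
    have h2 : s * ∑ l ∈ Finset.range k, s ^ (k - l) ≤ s * (s / (1 - s)) :=
      mul_le_mul_of_nonneg_left ih h0
    have h3 : s * (s / (1 - s)) + s = s / (1 - s) := by field_simp; ring
    linarith

private lemma aux_key (C η M q r t s : ℝ) (x : ℕ → ℝ)
    (hC : 0 < C) (hη : 0 < η) (hM0 : 0 ≤ M)
    (hq0 : 0 < q) (hq1 : q < 1) (hr0 : 0 < r) (ht0 : 0 < t) (ht1 : t < 1)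
    (hs0 : 0 < s) (hs1 : s < 1) (hst : s * t = r) (hrt : r ≤ t)
    (hm1 : 4 * η ≤ 1 - r) (hm2 : 4 * η ≤ 1 - q) (hm3 : 4 * η ≤ 1 - s)
    (hpos : ∀ k, 0 ≤ x k) (hM : ∀ k, x k ≤ M)
    (hrec : ∀ k : ℕ, x k ≤ C * r ^ k
        + η * ∑ l ∈ Finset.range k, r ^ (k - l) * x l
        + η * ∑' l : ℕ, q ^ l * x (k + l)) :
    ∀ k, x k ≤ 2 * C * t ^ k := by
  have hr1 : r < 1 := lt_of_le_of_lt hrt ht1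
  have key : ∀ n k, x k ≤ 2 * C * t ^ k + M * (1/2 : ℝ) ^ n := by
    intro n
    induction n with
    | zero =>
      intro k
      have := hM k
      have htk : 0 < 2 * C * t ^ k := by positivity
      simp only [pow_zero, mul_one]
      linarith
    | succ n ih =>
      intro k
      set ε := M * (1/2 : ℝ) ^ n with hεdef
      have hε0 : 0 ≤ ε := by positivity
      -- finite sum bound
      have hfin : ∑ l ∈ Finset.range k, r ^ (k - l) * x l
          ≤ 2 * C * t ^ k * (s / (1 - s)) + ε * (r / (1 - r)) := by
        calc ∑ l ∈ Finset.range k, r ^ (k - l) * x l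
            ≤ ∑ l ∈ Finset.range k, (2 * C * t ^ k * s ^ (k - l) + ε * r ^ (k - l)) := by
              apply Finset.sum_le_sum
              intro l hl
              rw [Finset.mem_range] at hl
              have h1 : x l ≤ 2 * C * t ^ l + ε := ih l
              have h2 : r ^ (k - l) = s ^ (k - l) * t ^ (k - l) := by rw [← hst, mul_pow]
              have h3 : t ^ (k - l) * t ^ l = t ^ k := by
                rw [← pow_add]; congr 1; omega
              calc r ^ (k - l) * x l
                  ≤ r ^ (k - l) * (2 * C * t ^ l + ε) :=
                    mul_le_mul_of_nonneg_left h1 (by positivity)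
                _ = 2 * C * (t ^ (k - l) * t ^ l) * s ^ (k - l) + ε * r ^ (k - l) := by
                    rw [h2]; ring
                _ = 2 * C * t ^ k * s ^ (k - l) + ε * r ^ (k - l) := by rw [h3]
          _ = 2 * C * t ^ k * (∑ l ∈ Finset.range k, s ^ (k - l))
              + ε * (∑ l ∈ Finset.range k, r ^ (k - l)) := by
              rw [Finset.sum_add_distrib, ← Finset.mul_sum, ← Finset.mul_sum]
          _ ≤ 2 * C * t ^ k * (s / (1 - s)) + ε * (r / (1 - r)) := by
              have g1 := geom_aux s hs0.le hs1 k
              have g2 := geom_aux r hr0.le hr1 k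
              have b1 := mul_le_mul_of_nonneg_left g1 (show (0:ℝ) ≤ 2 * C * t ^ k by positivity)
              have b2 := mul_le_mul_of_nonneg_left g2 hε0
              linarith
      -- tail bound
      have hqt0 : (0:ℝ) ≤ q * t := by positivity
      have hqt1 : q * t < 1 := by
        have : q * t ≤ q * 1 := mul_le_mul_of_nonneg_left ht1.le hq0.le
        linarith
      have hgs1 : Summable (fun l : ℕ => (q * t) ^ l) := summable_geometric_of_lt_one hqt0 hqt1
      have hgs2 : Summable (fun l : ℕ => q ^ l) := summable_geometric_of_lt_one hq0.le hq1
      have hsum1 : Summable (fun l : ℕ => 2 * C * t ^ k * (q * t) ^ l + ε * q ^ l) :=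
        (hgs1.mul_left _).add (hgs2.mul_left _)
      have hterm : ∀ l : ℕ, q ^ l * x (k + l) ≤ 2 * C * t ^ k * (q * t) ^ l + ε * q ^ l := by
        intro l
        have h1 : x (k + l) ≤ 2 * C * t ^ (k + l) + ε := ih (k + l)
        calc q ^ l * x (k + l)
            ≤ q ^ l * (2 * C * t ^ (k + l) + ε) :=
              mul_le_mul_of_nonneg_left h1 (by positivity)
          _ = 2 * C * t ^ k * (q * t) ^ l + ε * q ^ l := by rw [pow_add, mul_pow]; ring
      have hsum2 : Summable (fun l : ℕ => q ^ l * x (k + l)) :=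
        Summable.of_nonneg_of_le
          (fun l => mul_nonneg (pow_nonneg hq0.le l) (hpos (k + l))) hterm hsum1
      have htail : ∑' l : ℕ, q ^ l * x (k + l)
          ≤ 2 * C * t ^ k * (1 - q * t)⁻¹ + ε * (1 - q)⁻¹ := by
        calc ∑' l : ℕ, q ^ l * x (k + l)
            ≤ ∑' l : ℕ, (2 * C * t ^ k * (q * t) ^ l + ε * q ^ l) :=
              Summable.tsum_le_tsum hterm hsum2 hsum1
          _ = 2 * C * t ^ k * (∑' l : ℕ, (q * t) ^ l) + ε * (∑' l : ℕ, q ^ l) := by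
              rw [Summable.tsum_add (hgs1.mul_left _) (hgs2.mul_left _), tsum_mul_left, tsum_mul_left]
          _ = 2 * C * t ^ k * (1 - q * t)⁻¹ + ε * (1 - q)⁻¹ := by
              rw [tsum_geometric_of_lt_one hqt0 hqt1, tsum_geometric_of_lt_one hq0.le hq1]
      -- combine
      have h1s : (0:ℝ) < 1 - s := by linarith
      have h1r : (0:ℝ) < 1 - r := by linarith
      have h1q : (0:ℝ) < 1 - q := by linarith
      have h1qt : (0:ℝ) < 1 - q * t := by linarith
      have e0 : C * r ^ k ≤ C * t ^ k :=
        mul_le_mul_of_nonneg_left (pow_le_pow_left₀ hr0.le hrt k) hC.le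
      have sub1 : η * (s / (1 - s)) ≤ 1 / 4 := by
        rw [show η * (s / (1 - s)) = η * s / (1 - s) by ring, div_le_iff₀ h1s]
        nlinarith
      have sub2 : η * (r / (1 - r)) ≤ 1 / 4 := by
        rw [show η * (r / (1 - r)) = η * r / (1 - r) by ring, div_le_iff₀ h1r]
        have : η * r ≤ η * 1 := mul_le_mul_of_nonneg_left hr1.le hη.le
        linarith
      have sub3 : η * (1 - q * t)⁻¹ ≤ 1 / 4 := by
        rw [← div_eq_mul_inv, div_le_iff₀ h1qt]
        have : q * t ≤ q * 1 := mul_le_mul_of_nonneg_left ht1.le hq0.le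
        linarith
      have sub4 : η * (1 - q)⁻¹ ≤ 1 / 4 := by
        rw [← div_eq_mul_inv, div_le_iff₀ h1q]
        linarith
      have htk0 : (0:ℝ) ≤ 2 * C * t ^ k := by positivity
      have e1 : η * (2 * C * t ^ k * (s / (1 - s)) + ε * (r / (1 - r)))
          ≤ (C / 2) * t ^ k + ε / 4 := by
        have expand : η * (2 * C * t ^ k * (s / (1 - s)) + ε * (r / (1 - r)))
            = (2 * C * t ^ k) * (η * (s / (1 - s))) + ε * (η * (r / (1 - r))) := by ring
        rw [expand]
        have b1 := mul_le_mul_of_nonneg_left sub1 htk0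
        have b2 := mul_le_mul_of_nonneg_left sub2 hε0
        linarith
      have e2 : η * (2 * C * t ^ k * (1 - q * t)⁻¹ + ε * (1 - q)⁻¹)
          ≤ (C / 2) * t ^ k + ε / 4 := by
        have expand : η * (2 * C * t ^ k * (1 - q * t)⁻¹ + ε * (1 - q)⁻¹)
            = (2 * C * t ^ k) * (η * (1 - q * t)⁻¹) + ε * (η * (1 - q)⁻¹) := by ring
        rw [expand]
        have b1 := mul_le_mul_of_nonneg_left sub3 htk0
        have b2 := mul_le_mul_of_nonneg_left sub4 hε0
        linarith
      have total := hrec k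
      have m1' := mul_le_mul_of_nonneg_left hfin hη.le
      have m2' := mul_le_mul_of_nonneg_left htail hη.le
      have hfinal : x k ≤ 2 * C * t ^ k + ε / 2 := by linarith
      rw [pow_succ]
      rw [hεdef] at hfinal
      linarith
  intro k
  have hl : Tendsto (fun n : ℕ => 2 * C * t ^ k + M * (1/2 : ℝ) ^ n) atTop
      (nhds (2 * C * t ^ k + M * 0)) :=
    tendsto_const_nhds.add
      ((tendsto_pow_atTop_nhds_zero_of_lt_one (by norm_num) (by norm_num)).const_mul M)
  have := ge_of_tendsto' hl (fun n => key n k)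
  linarith

theorem stmt1 (η C γ γ' ρ : ℝ) (hη : 0 < η) (hC : 0 < C) (hγ : 0 < γ) (hγ' : 0 < γ')
    (x : ℕ → ℝ) (hpos : ∀ k, 0 ≤ x k) (hbdd : BddAbove (Set.range x))
    (hrec : ∀ k : ℕ, x k ≤ C * 2 ^ (-γ * (k : ℝ))
        + η * ∑ l ∈ Finset.range k, 2 ^ (-γ * ((k : ℝ) - (l : ℝ))) * x l
        + η * ∑' l : ℕ, 2 ^ (-γ' * (l : ℝ)) * x (k + l))
    (hρ : 0 < ρ) (hργ : ρ < γ)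
    (hsmall : η ≤ (1 / 4) *
        min (1 - 2 ^ (-γ)) (min (1 - 2 ^ (-γ')) (1 - 2 ^ (ρ - γ)))) :
    ∀ k : ℕ, x k ≤ (4 * C + ⨆ l, x l) * 2 ^ (-ρ * (k : ℝ)) := by
  have h2 : (1:ℝ) < 2 := one_lt_two
  set M := ⨆ l, x l with hMdef
  have hM : ∀ k, x k ≤ M := fun k => le_ciSup hbdd k
  have hM0 : 0 ≤ M := (hpos 0).trans (hM 0)
  have conv1 : ∀ (a : ℝ) (m : ℕ), (2:ℝ) ^ (a * (m : ℝ)) = ((2:ℝ) ^ a) ^ m := by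
    intro a m
    rw [Real.rpow_mul (by norm_num), Real.rpow_natCast]
  have hq0 : (0:ℝ) < 2 ^ (-γ') := Real.rpow_pos_of_pos (by norm_num) _
  have hr0 : (0:ℝ) < 2 ^ (-γ) := Real.rpow_pos_of_pos (by norm_num) _
  have ht0 : (0:ℝ) < 2 ^ (-ρ) := Real.rpow_pos_of_pos (by norm_num) _
  have hs0 : (0:ℝ) < 2 ^ (ρ - γ) := Real.rpow_pos_of_pos (by norm_num) _
  have hq1 : (2:ℝ) ^ (-γ') < 1 := Real.rpow_lt_one_of_one_lt_of_neg h2 (by linarith)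
  have ht1 : (2:ℝ) ^ (-ρ) < 1 := Real.rpow_lt_one_of_one_lt_of_neg h2 (by linarith)
  have hs1 : (2:ℝ) ^ (ρ - γ) < 1 := Real.rpow_lt_one_of_one_lt_of_neg h2 (by linarith)
  have hrt : (2:ℝ) ^ (-γ) ≤ 2 ^ (-ρ) :=
    Real.rpow_le_rpow_of_exponent_le h2.le (by linarith)
  have hst : (2:ℝ) ^ (ρ - γ) * 2 ^ (-ρ) = 2 ^ (-γ) := by
    rw [← Real.rpow_add (by norm_num), show ρ - γ + -ρ = -γ by ring]
  have hm1 : 4 * η ≤ 1 - 2 ^ (-γ) := by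
    have := min_le_left (1 - (2:ℝ) ^ (-γ)) (min (1 - 2 ^ (-γ')) (1 - 2 ^ (ρ - γ)))
    linarith
  have hm2 : 4 * η ≤ 1 - 2 ^ (-γ') := by
    have h := (min_le_right (1 - (2:ℝ) ^ (-γ)) (min (1 - 2 ^ (-γ')) (1 - 2 ^ (ρ - γ)))).trans
      (min_le_left _ _)
    linarith
  have hm3 : 4 * η ≤ 1 - 2 ^ (ρ - γ) := by
    have h := (min_le_right (1 - (2:ℝ) ^ (-γ)) (min (1 - 2 ^ (-γ')) (1 - 2 ^ (ρ - γ)))).trans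
      (min_le_right _ _)
    linarith
  have hrec' : ∀ k : ℕ, x k ≤ C * ((2:ℝ) ^ (-γ)) ^ k
      + η * ∑ l ∈ Finset.range k, ((2:ℝ) ^ (-γ)) ^ (k - l) * x l
      + η * ∑' l : ℕ, ((2:ℝ) ^ (-γ')) ^ l * x (k + l) := by
    intro k
    have h := hrec k
    have e1 : C * (2:ℝ) ^ (-γ * (k : ℝ)) = C * ((2:ℝ) ^ (-γ)) ^ k := by rw [conv1]
    have e2 : ∑ l ∈ Finset.range k, (2:ℝ) ^ (-γ * ((k : ℝ) - (l : ℝ))) * x l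
        = ∑ l ∈ Finset.range k, ((2:ℝ) ^ (-γ)) ^ (k - l) * x l := by
      apply Finset.sum_congr rfl
      intro l hl
      rw [Finset.mem_range] at hl
      rw [show (k:ℝ) - (l:ℝ) = ((k - l : ℕ) : ℝ) by
        rw [Nat.cast_sub hl.le], conv1]
    have e3 : ∑' l : ℕ, (2:ℝ) ^ (-γ' * (l : ℝ)) * x (k + l)
        = ∑' l : ℕ, ((2:ℝ) ^ (-γ')) ^ l * x (k + l) := by
      apply tsum_congr
      intro l
      rw [conv1]
    rw [e1, e2, e3] at h
    exact h
  have hkey := aux_key C η M (2 ^ (-γ')) (2 ^ (-γ)) (2 ^ (-ρ)) (2 ^ (ρ - γ)) x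
    hC hη hM0 hq0 hq1 hr0 ht0 ht1 hs0 hs1 hst hrt hm1 hm2 hm3 hpos hM hrec'
  intro k
  rw [conv1]
  have htk : (0:ℝ) ≤ ((2:ℝ) ^ (-ρ)) ^ k := by positivity
  have h1 := hkey k
  have h2' : 2 * C * ((2:ℝ) ^ (-ρ)) ^ k ≤ (4 * C + M) * ((2:ℝ) ^ (-ρ)) ^ k :=
    mul_le_mul_of_nonneg_right (by linarith) htk
  linarith
end

section
/- (Sharpness of the auxiliary exponents) Let d ≥ 9, p > 8/d, and s_c = d/2 - 4/p with 1 ≤ s_c ≤ 2. Define r_1 = 2d(8/p - d + 6 + s_c) / (d(8/p - d + 6) + 2 s_c (d - 5 - 4/p)) and r_2 = 2d(2p + 8/p - d + 4 + s_c) / (d(2p + 8/p - d + 4) + 2 s_c (d - 4 - 4/p - p)). Then r_1 < pd/4 and r_2 < pd/4. -/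
theorem stmt19 (d : ℕ) (hd : 9 ≤ d) (p sc : ℝ) (hp : 8 / (d : ℝ) < p)
    (hsc : sc = (d : ℝ) / 2 - 4 / p) (h1 : 1 ≤ sc) (h2 : sc ≤ 2) :
    2 * (d : ℝ) * (8 / p - (d : ℝ) + 6 + sc) /
        ((d : ℝ) * (8 / p - (d : ℝ) + 6) + 2 * sc * ((d : ℝ) - 5 - 4 / p)) <
      p * (d : ℝ) / 4 ∧
    2 * (d : ℝ) * (2 * p + 8 / p - (d : ℝ) + 4 + sc) /
        ((d : ℝ) * (2 * p + 8 / p - (d : ℝ) + 4) + 2 * sc * ((d : ℝ) - 4 - 4 / p - p)) <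
      p * (d : ℝ) / 4 := by
  set D : ℝ := (d : ℝ) with hD
  have hD9 : (9 : ℝ) ≤ D := by rw [hD]; exact_mod_cast hd
  have hD0 : (0 : ℝ) < D := by linarith
  have hp0 : (0 : ℝ) < p := lt_trans (by positivity) hp
  have h4 : 4 / p = D / 2 - sc := by linarith
  have h8 : 8 / p = D - 2 * sc := by
    have : 8 / p = 2 * (4 / p) := by ring
    rw [this, h4]; ring
  have hps : p * (D - 2 * sc) = 8 := by
    rw [← h8]; field_simp
  have hden1 : (0 : ℝ) < D * (8 / p - D + 6) + 2 * sc * (D - 5 - 4 / p) := by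
    rw [h8, h4]; nlinarith
  have hden2 : (0 : ℝ) < D * (2 * p + 8 / p - D + 4) + 2 * sc * (D - 4 - 4 / p - p) := by
    rw [h8, h4]; nlinarith [mul_pos hp0 hD0, mul_pos hp0 (show (0:ℝ) < sc by linarith)]
  constructor
  · rw [div_lt_div_iff₀ hden1 (by norm_num : (0:ℝ) < 4), h8, h4]
    nlinarith [mul_pos (mul_pos hp0 hD0) (show (0:ℝ) < sc by linarith)]
  · rw [div_lt_div_iff₀ hden2 (by norm_num : (0:ℝ) < 4), h8, h4]
    have hsc0 : (0:ℝ) < sc := by linarith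
    have key : p * D * (D * (2 * p + (D - 2 * sc) - D + 4) +
        2 * sc * (D - 4 - (D / 2 - sc) - p)) =
        p * (D - 2 * sc) * (D * (2 * p + (D - 2 * sc) - D + 4 + sc)) +
        2 * p * p * D * sc := by ring
    have h3 : p * (D - 2 * sc) * (D * (2 * p + (D - 2 * sc) - D + 4 + sc)) =
        8 * (D * (2 * p + (D - 2 * sc) - D + 4 + sc)) := by rw [hps]
    have hpos : 0 < 2 * p * p * D * sc := by positivity
    nlinarith [key, h3, hpos]
end
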